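/- Let A be a V×V-matrix over a field and Z ⊆ V with A[Z,Z] nonsingular. Then for all X ⊆ V, the nullity of (A*Z)[X,X] equals the nullity of A[X △ Z, X △ Z], where △ denotes symmetric difference. -/

import Mathlib

open Matrix
open scoped symmDiff

variable {V F : Type*} [Fintype V] [DecidableEq V] [Field F]

/-- Nullity of a matrix: dimension of the kernel of the associated linear map. -/
noncomputable def nullity {F : Type*} [Field F] {m n : Type*} [Fintype m] [Fintype n]
    (M : Matrix m n F) : ℕ :=
  Module.finrank F (LinearMap.ker M.mulVecLin)

/-- Submatrix A[X,Y]: rows indexed by X, columns by Y. -/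
def subm (A : Matrix V V F) (X Y : Finset V) : Matrix X Y F :=
  A.submatrix Subtype.val Subtype.val

/-- Principal pivot transform of A on Z, defined blockwise. -/
noncomputable def ppt (A : Matrix V V F) (Z : Finset V) : Matrix V V F :=
  fun i j =>
    if hi : i ∈ Z then
      if hj : j ∈ Z then (subm A Z Z)⁻¹ ⟨i, hi⟩ ⟨j, hj⟩
      else - ∑ k : Z, (subm A Z Z)⁻¹ ⟨i, hi⟩ k * A k j
    else
      if hj : j ∈ Z then ∑ k : Z, A i k * (subm A Z Z)⁻¹ k ⟨j, hj⟩
      else A i j - ∑ k : Z, ∑ l : Z, A i k * (subm A Z Z)⁻¹ k l * A l j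

set_option linter.unusedSectionVars false

namespace PPTAux

section
variable (A : Matrix V V F) (Z : Finset V)

def zo (Z : Finset V) (f : V → F) : V → F := fun i => if i ∈ Z then 0 else f i

lemma sum_split (f : V → F) :
    ∑ j : V, f j = (∑ k : Z, f k) + ∑ j : V, zo Z f j := by
  classical
  rw [Finset.sum_coe_sort Z f, ← Finset.sum_add_sum_compl Z f]
  congr 1
  rw [show ∑ j : V, zo Z f j = ∑ j ∈ Zᶜ, zo Z f j from
    (Finset.sum_subset (Finset.subset_univ Zᶜ) (fun x _ hx => by simp at hx; simp [zo, hx])).symm]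
  exact Finset.sum_congr rfl (fun x hx => by simp at hx; simp [zo, hx])

-- the auxiliary vector
noncomputable def hv (g : V → F) : Z → F :=
  ((subm A Z Z)⁻¹).mulVec (fun k : Z => g k - A.mulVec (zo Z g) k)

lemma ppt_mulVec (g : V → F) (i : V) :
    (ppt A Z).mulVec g i =
      if hi : i ∈ Z then hv A Z g ⟨i, hi⟩
      else A.mulVec (zo Z g) i + ∑ k : Z, A i k * hv A Z g k := by
  classical
  set K := (subm A Z Z)⁻¹ with hK
  by_cases hi : i ∈ Z
  · simp only [dif_pos hi]
    have : (ppt A Z).mulVec g i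
        = ∑ j : V, (if hj : j ∈ Z then K ⟨i,hi⟩ ⟨j,hj⟩ * g j
            else (- ∑ k : Z, K ⟨i,hi⟩ k * A k j) * g j) := by
      rw [mulVec]
      refine Finset.sum_congr rfl (fun j _ => ?_)
      by_cases hj : j ∈ Z <;> simp [ppt, hi, hj, dotProduct, ← hK]
    rw [this, sum_split (Z := Z)]
    have h1 : (∑ k : Z, (if hj : (k:V) ∈ Z then K ⟨i,hi⟩ ⟨k,hj⟩ * g k
            else (- ∑ l : Z, K ⟨i,hi⟩ l * A l k) * g k)) = ∑ k : Z, K ⟨i,hi⟩ k * g k := by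
      refine Finset.sum_congr rfl (fun k _ => ?_)
      rw [dif_pos k.2]
    have h2 : ∑ j : V, zo Z (fun j => (if hj : j ∈ Z then K ⟨i,hi⟩ ⟨j,hj⟩ * g j
            else (- ∑ k : Z, K ⟨i,hi⟩ k * A k j) * g j)) j
        = - ∑ k : Z, K ⟨i,hi⟩ k * (A.mulVec (zo Z g) k) := by
      have : ∀ j : V, zo Z (fun j => (if hj : j ∈ Z then K ⟨i,hi⟩ ⟨j,hj⟩ * g j
            else (- ∑ k : Z, K ⟨i,hi⟩ k * A k j) * g j)) j
          = - ∑ k : Z, K ⟨i,hi⟩ k * (A k j * zo Z g j) := by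
        intro j
        by_cases hj : j ∈ Z
        · simp [zo, hj]
        · simp only [zo, if_neg hj, dif_neg hj, neg_mul, Finset.sum_mul, neg_inj]
          exact Finset.sum_congr rfl (fun k _ => by ring)
      rw [Finset.sum_congr rfl (fun j _ => this j)]
      simp only [Finset.sum_neg_distrib, neg_inj]
      rw [Finset.sum_comm]
      simp [mulVec, dotProduct, Finset.mul_sum]
    rw [h1, h2, hv, mulVec]
    simp [dotProduct, mul_sub, Finset.sum_sub_distrib, sub_eq_add_neg, ← hK, mul_add, mul_neg,
      Finset.sum_add_distrib, Finset.sum_neg_distrib]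
  · simp only [dif_neg hi]
    have e1 : (ppt A Z).mulVec g i
        = ∑ j : V, (if hj : j ∈ Z then (∑ k : Z, A i k * K k ⟨j,hj⟩) * g j
            else (A i j - ∑ k : Z, ∑ l : Z, A i k * K k l * A l j) * g j) := by
      rw [mulVec]
      refine Finset.sum_congr rfl (fun j _ => ?_)
      by_cases hj : j ∈ Z <;> simp [ppt, hi, hj, dotProduct, ← hK]
    rw [e1, sum_split (Z := Z)]
    have h1 : (∑ k : Z, (if hj : (k:V) ∈ Z then (∑ l : Z, A i l * K l ⟨k,hj⟩) * g k
          else (A i (k:V) - ∑ l : Z, ∑ m : Z, A i l * K l m * A m k) * g k))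
        = ∑ k : Z, A i k * ∑ l : Z, K k l * g l := by
      rw [Finset.sum_congr rfl (fun k _ => by rw [dif_pos k.2])]
      simp only [Finset.sum_mul, Finset.mul_sum]
      rw [Finset.sum_comm]
      exact Finset.sum_congr rfl (fun k _ => Finset.sum_congr rfl (fun l _ => by ring))
    have h2 : ∑ j : V, zo Z (fun j => (if hj : j ∈ Z then (∑ k : Z, A i k * K k ⟨j,hj⟩) * g j
            else (A i j - ∑ k : Z, ∑ l : Z, A i k * K k l * A l j) * g j)) j
        = A.mulVec (zo Z g) i - ∑ k : Z, A i k * ∑ l : Z, K k l * (A.mulVec (zo Z g) l) := by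
      have hterm : ∀ j : V, zo Z (fun j => (if hj : j ∈ Z then (∑ k : Z, A i k * K k ⟨j,hj⟩) * g j
            else (A i j - ∑ k : Z, ∑ l : Z, A i k * K k l * A l j) * g j)) j
          = A i j * zo Z g j - ∑ k : Z, ∑ l : Z, A i k * K k l * (A l j * zo Z g j) := by
        intro j
        by_cases hj : j ∈ Z
        · simp [zo, hj]
        · simp only [zo, if_neg hj, dif_neg hj, sub_mul, Finset.sum_mul]
          congr 1
          exact Finset.sum_congr rfl (fun k _ => Finset.sum_congr rfl (fun l _ => by ring))
      rw [Finset.sum_congr rfl (fun j _ => hterm j), Finset.sum_sub_distrib]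
      congr 1
      · rw [Finset.sum_comm]
        refine Finset.sum_congr rfl (fun k _ => ?_)
        rw [Finset.sum_comm, Finset.mul_sum]
        refine Finset.sum_congr rfl (fun l _ => ?_)
        rw [show (A.mulVec (zo Z g)) l.val = ∑ j : V, A l j * zo Z g j from rfl,
          Finset.mul_sum, Finset.mul_sum]
        exact Finset.sum_congr rfl (fun j _ => by ring)
    rw [h1, h2, hv]
    have hkv : ∀ k : Z, ((subm A Z Z)⁻¹.mulVec (fun k : Z => g k - A.mulVec (zo Z g) k)) k
        = ∑ l : Z, K k l * g l - ∑ l : Z, K k l * (A.mulVec (zo Z g) l) := by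
      intro k
      simp [mulVec, dotProduct, mul_sub, Finset.sum_sub_distrib, ← hK]
    simp only [hkv, mul_sub, Finset.mul_sum, Finset.sum_sub_distrib]
    ring

lemma mulVec_split (f : V → F) (i : V) :
    A.mulVec f i = (∑ k : Z, A i k * f k) + A.mulVec (zo Z f) i := by
  classical
  rw [show A.mulVec f i = ∑ j : V, A i j * f j from rfl,
    sum_split (Z := Z) (fun j => A i j * f j)]
  congr 1
  refine Finset.sum_congr rfl (fun j _ => ?_)
  by_cases hj : j ∈ Z <;> simp [zo, hj]

lemma zo_ite (w u : V → F) : zo Z (fun j => if j ∈ Z then u j else w j) = zo Z w := by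
  funext j
  by_cases hj : j ∈ Z <;> simp [zo, hj]

lemma exchange_BA (hZ : IsUnit (subm A Z Z).det) (w : V → F) (i : V) :
    A.mulVec (fun j => if j ∈ Z then (ppt A Z).mulVec w j else w j) i
      = if i ∈ Z then w i else (ppt A Z).mulVec w i := by
  classical
  set u : V → F := fun j => if j ∈ Z then (ppt A Z).mulVec w j else w j with hu
  have hzo : zo Z u = zo Z w := zo_ite Z w _
  have huk : ∀ k : Z, u k = hv A Z w k := by
    intro k
    rw [hu]
    simp only [k.2, if_true]
    rw [ppt_mulVec A Z w k, dif_pos k.2]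
  have hs : (∑ k : Z, A i k * u k) = ∑ k : Z, A i k * hv A Z w k :=
    Finset.sum_congr rfl (fun k _ => by rw [huk k])
  have key : ∀ hi : i ∈ Z, (∑ k : Z, A i k * hv A Z w k)
      = w i - A.mulVec (zo Z w) i := by
    intro hi
    have h0 : (∑ k : Z, A i k * hv A Z w k) = (subm A Z Z).mulVec (hv A Z w) ⟨i, hi⟩ := rfl
    rw [h0, hv, Matrix.mulVec_mulVec, Matrix.mul_nonsing_inv _ hZ, Matrix.one_mulVec]
  rw [mulVec_split A Z u i, hzo, hs]
  by_cases hi : i ∈ Z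
  · rw [if_pos hi, key hi]; ring
  · rw [if_neg hi, ppt_mulVec A Z w i, dif_neg hi]; ring

lemma exchange_AB (hZ : IsUnit (subm A Z Z).det) (u : V → F) (i : V) :
    (ppt A Z).mulVec (fun j => if j ∈ Z then A.mulVec u j else u j) i
      = if i ∈ Z then u i else A.mulVec u i := by
  classical
  set u' : V → F := fun j => if j ∈ Z then A.mulVec u j else u j with hu'
  have hzo : zo Z u' = zo Z u := zo_ite Z u _
  have hf : (fun k : Z => u' k - A.mulVec (zo Z u') k)
      = (subm A Z Z).mulVec (fun k : Z => u k) := by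
    funext k
    rw [hu']
    simp only [k.2, if_true, hzo]
    rw [mulVec_split A Z u k]
    rw [show zo Z (fun j => if j ∈ Z then A.mulVec u j else u j) = zo Z u from hzo]
    rw [show (subm A Z Z).mulVec (fun k : Z => u (k:V)) k = ∑ l : Z, A k l * u l from rfl]
    ring
  have hhv : ∀ k : Z, hv A Z u' k = u k := by
    have h0 : hv A Z u' = fun k : Z => u k := by
      rw [hv, hf, Matrix.mulVec_mulVec, Matrix.nonsing_inv_mul _ hZ, Matrix.one_mulVec]
    intro k; rw [h0]
  rw [ppt_mulVec A Z u' i]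
  by_cases hi : i ∈ Z
  · rw [dif_pos hi, if_pos hi]; exact hhv ⟨i, hi⟩
  · rw [dif_neg hi, if_neg hi, hzo]
    have hs : (∑ k : Z, A i k * hv A Z u' k) = ∑ k : Z, A i k * u k :=
      Finset.sum_congr rfl (fun k _ => by rw [hhv k])
    rw [hs, mulVec_split A Z u i]
    ring


def extv (X : Finset V) (x : X → F) : V → F := fun i => if h : i ∈ X then x ⟨i, h⟩ else 0

lemma extv_add (X : Finset V) (x x' : X → F) :
    extv X (x + x') = extv X x + extv X x' := by
  funext i
  by_cases h : i ∈ X <;> simp [extv, h]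

lemma extv_smul (X : Finset V) (c : F) (x : X → F) :
    extv X (c • x) = c • extv X x := by
  funext i
  by_cases h : i ∈ X <;> simp [extv, h]

lemma subm_mulVec (M : Matrix V V F) (S : Finset V) (x : S → F) (i : S) :
    (subm M S S).mulVec x i = M.mulVec (extv S x) i := by
  classical
  rw [show M.mulVec (extv S x) (i:V) = ∑ j : V, M i j * extv S x j from rfl]
  rw [show (∑ j : V, M i j * extv S x j) = ∑ j ∈ S, M i j * extv S x j from
    (Finset.sum_subset (Finset.subset_univ S) (fun j _ hj => by simp [extv, hj])).symm]
  rw [← Finset.sum_attach S (fun j => M i j * extv S x j)]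
  refine (Finset.sum_congr rfl (fun j _ => ?_)).symm
  simp [extv, j.2, subm, mulVec, dotProduct]

lemma mem_ker_iff (M : Matrix V V F) (S : Finset V) (x : S → F) :
    x ∈ LinearMap.ker (subm M S S).mulVecLin ↔ ∀ i : S, M.mulVec (extv S x) i = 0 := by
  rw [LinearMap.mem_ker]
  constructor
  · intro h i
    rw [← subm_mulVec]
    exact congrFun h i
  · intro h
    funext i
    rw [Matrix.mulVecLin_apply, subm_mulVec]
    exact h i

/-- The map x ↦ (swap vector restricted to T). -/
noncomputable def swapMap (M : Matrix V V F) (Z S T : Finset V) : (S → F) →ₗ[F] (T → F) where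
  toFun x := fun j => if (j : V) ∈ Z then M.mulVec (extv S x) j else extv S x j
  map_add' x x' := by
    funext j
    by_cases h : (j : V) ∈ Z <;>
      simp [h, extv_add, Matrix.mulVec_add]
  map_smul' c x := by
    funext j
    by_cases h : (j : V) ∈ Z <;>
      simp [h, extv_smul, Matrix.mulVec_smul]

end


theorem main (A : Matrix V V F) (Z : Finset V)
    (hZ : IsUnit (subm A Z Z).det) (X : Finset V) :
    nullity (subm (ppt A Z) X X) = nullity (subm A (X ∆ Z) (X ∆ Z)) := by
  classical
  set B := ppt A Z with hB
  set Y := X ∆ Z with hY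
  have hmemY : ∀ i : V, i ∈ Y ↔ (i ∈ X ∧ i ∉ Z) ∨ (i ∈ Z ∧ i ∉ X) := fun i =>
    Finset.mem_symmDiff
  -- forward extension identity
  have extF : ∀ x : X → F, (∀ i : X, B.mulVec (extv X x) i = 0) →
      extv Y (swapMap B Z X Y x)
        = fun i => if i ∈ Z then B.mulVec (extv X x) i else extv X x i := by
    intro x hx
    funext i
    by_cases hiY : i ∈ Y
    · rw [show extv Y (swapMap B Z X Y x) i = swapMap B Z X Y x ⟨i, hiY⟩ from dif_pos hiY]
      rfl
    · rw [show extv Y (swapMap B Z X Y x) i = 0 from dif_neg hiY]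
      rw [hmemY i] at hiY
      by_cases hiZ : i ∈ Z
      · have hiX : i ∈ X := by tauto
        rw [if_pos hiZ, (hx ⟨i, hiX⟩)]
      · have hiX : i ∉ X := by tauto
        rw [if_neg hiZ, show extv X x i = 0 from dif_neg hiX]
  -- backward extension identity
  have extB : ∀ y : Y → F, (∀ j : Y, A.mulVec (extv Y y) j = 0) →
      extv X (swapMap A Z Y X y)
        = fun i => if i ∈ Z then A.mulVec (extv Y y) i else extv Y y i := by
    intro y hy
    funext i
    by_cases hiX : i ∈ X
    · rw [show extv X (swapMap A Z Y X y) i = swapMap A Z Y X y ⟨i, hiX⟩ from dif_pos hiX]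
      rfl
    · rw [show extv X (swapMap A Z Y X y) i = 0 from dif_neg hiX]
      by_cases hiZ : i ∈ Z
      · have hiY : i ∈ Y := by rw [hmemY i]; tauto
        rw [if_pos hiZ, (hy ⟨i, hiY⟩)]
      · have hiY : i ∉ Y := by rw [hmemY i]; tauto
        rw [if_neg hiZ, show extv Y y i = 0 from dif_neg hiY]
  -- forward well-definedness
  have fwd : ∀ x ∈ LinearMap.ker (subm B X X).mulVecLin,
      swapMap B Z X Y x ∈ LinearMap.ker (subm A Y Y).mulVecLin := by
    intro x hx
    rw [mem_ker_iff] at hx ⊢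
    intro j
    rw [extF x hx, exchange_BA A Z hZ (extv X x) j]
    have hjY := j.2
    rw [hmemY j] at hjY
    by_cases hjZ : (j : V) ∈ Z
    · rw [if_pos hjZ]
      have : (j : V) ∉ X := by tauto
      exact dif_neg this
    · rw [if_neg hjZ]
      have hjX : (j : V) ∈ X := by tauto
      exact hx ⟨j, hjX⟩
  -- backward well-definedness
  have bwd : ∀ y ∈ LinearMap.ker (subm A Y Y).mulVecLin,
      swapMap A Z Y X y ∈ LinearMap.ker (subm B X X).mulVecLin := by
    intro y hy
    rw [mem_ker_iff] at hy ⊢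
    intro i
    rw [extB y hy, exchange_AB A Z hZ (extv Y y) i]
    have hiX := i.2
    by_cases hiZ : (i : V) ∈ Z
    · rw [if_pos hiZ]
      have : (i : V) ∉ Y := by rw [hmemY i]; tauto
      exact dif_neg this
    · rw [if_neg hiZ]
      have hiY : (i : V) ∈ Y := by rw [hmemY i]; tauto
      exact hy ⟨i, hiY⟩
  -- round trip 1
  have rt1 : ∀ x, (hx : x ∈ LinearMap.ker (subm B X X).mulVecLin) →
      swapMap A Z Y X (swapMap B Z X Y x) = x := by
    intro x hx
    rw [mem_ker_iff] at hx
    funext i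
    rw [show swapMap A Z Y X (swapMap B Z X Y x) i
      = if (i:V) ∈ Z then A.mulVec (extv Y (swapMap B Z X Y x)) i
        else extv Y (swapMap B Z X Y x) i from rfl]
    rw [extF x hx, exchange_BA A Z hZ (extv X x) i]
    by_cases hiZ : (i : V) ∈ Z
    · rw [if_pos hiZ, if_pos hiZ, show extv X x i = x i from dif_pos i.2]
    · rw [if_neg hiZ]
      simp only [if_neg hiZ]
      exact dif_pos i.2
  -- round trip 2
  have rt2 : ∀ y, (hy : y ∈ LinearMap.ker (subm A Y Y).mulVecLin) →
      swapMap B Z X Y (swapMap A Z Y X y) = y := by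
    intro y hy
    rw [mem_ker_iff] at hy
    funext j
    rw [show swapMap B Z X Y (swapMap A Z Y X y) j
      = if (j:V) ∈ Z then B.mulVec (extv X (swapMap A Z Y X y)) j
        else extv X (swapMap A Z Y X y) j from rfl]
    rw [extB y hy, exchange_AB A Z hZ (extv Y y) j]
    by_cases hjZ : (j : V) ∈ Z
    · rw [if_pos hjZ, if_pos hjZ, show extv Y y j = y j from dif_pos j.2]
    · rw [if_neg hjZ]
      simp only [if_neg hjZ]
      exact dif_pos j.2
  -- build the equivalence
  let Φ := (swapMap B Z X Y).restrict fwd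
  let Ψ := (swapMap A Z Y X).restrict bwd
  have e : (LinearMap.ker (subm B X X).mulVecLin) ≃ₗ[F]
      (LinearMap.ker (subm A Y Y).mulVecLin) :=
    LinearEquiv.ofLinear Φ Ψ
      (by
        ext y
        exact congrFun (congrArg Subtype.val (Subtype.ext (rt2 y.1 y.2) :
          (⟨swapMap B Z X Y (swapMap A Z Y X y.1), fwd _ (bwd y.1 y.2)⟩ :
            LinearMap.ker (subm A Y Y).mulVecLin) = y)) _)
      (by
        ext x
        exact congrFun (congrArg Subtype.val (Subtype.ext (rt1 x.1 x.2) :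
          (⟨swapMap A Z Y X (swapMap B Z X Y x.1), bwd _ (fwd x.1 x.2)⟩ :
            LinearMap.ker (subm B X X).mulVecLin) = x)) _)
  exact e.finrank_eq

end PPTAux

/-- Nullity of principal submatrices under PPT: n((A*Z)[X,X]) = n(A[X △ Z, X △ Z]). -/
theorem nullity_principal_submatrix_ppt (A : Matrix V V F) (Z : Finset V)
    (hZ : IsUnit (subm A Z Z).det) (X : Finset V) :
    nullity (subm (ppt A Z) X X) = nullity (subm A (X ∆ Z) (X ∆ Z)) :=
  PPTAux.main A Z hZ X
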